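/- arXiv:2303.13628 — 3 statements merged into one kernel-verified Lean document; each statement's English description precedes it below -/
import Mathlib

section
/- Let γ ≥ 10 be a real number, let s₁ ≤ s₂ ≤ s₃ ≤ s₄ be natural numbers, and let q₁, q₂, q₃, q₄ be real numbers such that q₁ + q₂ + q₃ + q₄ = 0, |q_i| ≤ √2 · γ^(−s_i) for i = 1, 2, 3, 4, and |q₁| ≥ γ^(−s₁−1). Then s₂ ≤ s₁ + 1. -/
/-- Quantitative core of the conservation-of-momentum sector lemma (Lemma 2.1):
at a quartic vertex, the two smallest sector indices differ by at most 1. -/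
theorem sector_indices_two_smallest_close
    (γ : ℝ) (hγ : 10 ≤ γ)
    (s₁ s₂ s₃ s₄ : ℕ) (h12 : s₁ ≤ s₂) (h23 : s₂ ≤ s₃) (h34 : s₃ ≤ s₄)
    (q₁ q₂ q₃ q₄ : ℝ)
    (hsum : q₁ + q₂ + q₃ + q₄ = 0)
    (hb₁ : |q₁| ≤ Real.sqrt 2 * γ ^ (-(s₁ : ℝ)))
    (hb₂ : |q₂| ≤ Real.sqrt 2 * γ ^ (-(s₂ : ℝ)))
    (hb₃ : |q₃| ≤ Real.sqrt 2 * γ ^ (-(s₃ : ℝ)))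
    (hb₄ : |q₄| ≤ Real.sqrt 2 * γ ^ (-(s₄ : ℝ)))
    (hlow : γ ^ (-(s₁ : ℝ) - 1) ≤ |q₁|) :
    s₂ ≤ s₁ + 1 := by
  by_contra h
  push_neg at h
  have hs2 : (s₁ : ℝ) + 2 ≤ s₂ := by exact_mod_cast h
  have hγ1 : (1 : ℝ) < γ := by linarith
  have hγ0 : (0 : ℝ) < γ := by linarith
  -- monotonicity of rpow
  have hmono : γ ^ (-(s₂ : ℝ)) ≤ γ ^ (-(s₁ : ℝ) - 2) :=
    Real.rpow_le_rpow_left_iff hγ1 |>.mpr (by linarith)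
  have hm3 : γ ^ (-(s₃ : ℝ)) ≤ γ ^ (-(s₂ : ℝ)) :=
    Real.rpow_le_rpow_left_iff hγ1 |>.mpr (by
      have : (s₂ : ℝ) ≤ s₃ := by exact_mod_cast h23
      linarith)
  have hm4 : γ ^ (-(s₄ : ℝ)) ≤ γ ^ (-(s₂ : ℝ)) :=
    Real.rpow_le_rpow_left_iff hγ1 |>.mpr (by
      have : (s₂ : ℝ) ≤ s₄ := by exact_mod_cast le_trans h23 h34
      linarith)
  have hsqrt : (0 : ℝ) ≤ Real.sqrt 2 := Real.sqrt_nonneg 2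
  have h1 : |q₁| ≤ 3 * Real.sqrt 2 * γ ^ (-(s₂ : ℝ)) := by
    have : q₁ = -(q₂ + q₃ + q₄) := by linarith
    rw [this, abs_neg]
    calc |q₂ + q₃ + q₄| ≤ |q₂| + |q₃| + |q₄| := abs_add_three _ _ _
      _ ≤ Real.sqrt 2 * γ ^ (-(s₂ : ℝ)) + Real.sqrt 2 * γ ^ (-(s₂ : ℝ))
          + Real.sqrt 2 * γ ^ (-(s₂ : ℝ)) := by
        have b3 : |q₃| ≤ Real.sqrt 2 * γ ^ (-(s₂ : ℝ)) :=
          hb₃.trans (by nlinarith)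
        have b4 : |q₄| ≤ Real.sqrt 2 * γ ^ (-(s₂ : ℝ)) :=
          hb₄.trans (by nlinarith)
        linarith
      _ = 3 * Real.sqrt 2 * γ ^ (-(s₂ : ℝ)) := by ring
  have key : γ ^ (-(s₁ : ℝ) - 1) ≤ 3 * Real.sqrt 2 * γ ^ (-(s₁ : ℝ) - 2) := by
    calc γ ^ (-(s₁ : ℝ) - 1) ≤ |q₁| := hlow
      _ ≤ 3 * Real.sqrt 2 * γ ^ (-(s₂ : ℝ)) := h1
      _ ≤ 3 * Real.sqrt 2 * γ ^ (-(s₁ : ℝ) - 2) := by nlinarith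
  have hsplit : γ ^ (-(s₁ : ℝ) - 1) = γ * γ ^ (-(s₁ : ℝ) - 2) := by
    rw [← Real.rpow_one_add' (by linarith) (by intro hc; linarith)]
    ring_nf
  have hp : (0 : ℝ) < γ ^ (-(s₁ : ℝ) - 2) := Real.rpow_pos_of_pos hγ0 _
  have hs2lt : Real.sqrt 2 < 2 := by
    nlinarith [Real.sq_sqrt (by norm_num : (2:ℝ) ≥ 0), Real.sqrt_nonneg 2]
  rw [hsplit] at key
  nlinarith
end

section
/- There exists a constant K > 0 such that the following holds for every real γ ≥ 10 and all natural numbers j ≥ 1 and j₀ ≥ 0. Let S be the set of pairs of natural numbers σ = (s₊, s₋) with 2s₊ ≥ j − j₀, 2s₋ ≥ j − j₀, s₊ ≤ j, s₋ ≤ j, and 2(s₊ + s₋) ≥ 3j − j₀, and for σ ∈ S set l(σ) = s₊ + s₋ − 3j/2 + j₀/2 (a nonnegative rational). Call a quadruple (σ₁, σ₂, σ₃, σ₄) ∈ S⁴ admissible if for each direction ε ∈ {+, −}, writing t_ε = min_{1 ≤ i ≤ 4} s_{i,ε}, either at least two indices i ∈ {1,2,3,4} satisfy s_{i,ε} ≤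 t_ε + 1, or t_ε = j. Then for every fixed σ₄ ∈ S, the sum over all (σ₁, σ₂, σ₃) ∈ S³ with (σ₁, σ₂, σ₃, σ₄) admissible of γ^(−(l(σ₁) + l(σ₂) + l(σ₃))/4) is at most K · (j + j₀ + 1). -/
open Finset

/-- The set of sector indices `σ = (s₊, s₋)` at shell scale `j` (with parameter `j₀`):
`2 s₊ ≥ j − j₀`, `2 s₋ ≥ j − j₀`, `s₊ ≤ j`, `s₋ ≤ j` and `2(s₊ + s₋) ≥ 3 j − j₀`. -/
def sectorSet (j j₀ : ℕ) : Finset (ℕ × ℕ) :=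
  (Finset.range (j + 1) ×ˢ Finset.range (j + 1)).filter
    (fun σ => j ≤ 2 * σ.1 + j₀ ∧ j ≤ 2 * σ.2 + j₀ ∧ 3 * j ≤ 2 * (σ.1 + σ.2) + j₀)

/-- The depth `l(σ) = s₊ + s₋ − 3j/2 + j₀/2` of a sector. -/
noncomputable def depth (j j₀ : ℕ) (σ : ℕ × ℕ) : ℝ :=
  (σ.1 : ℝ) + (σ.2 : ℝ) - 3 * (j : ℝ) / 2 + (j₀ : ℝ) / 2

/-- Admissibility in one direction: writing `t` for the minimum of the four sector
indices, either at least two of them are `≤ t + 1`, or `t = j`. -/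
def admDir (j a b c d : ℕ) : Prop :=
  2 ≤ ((if a ≤ min (min a b) (min c d) + 1 then 1 else 0)
      + (if b ≤ min (min a b) (min c d) + 1 then 1 else 0)
      + (if c ≤ min (min a b) (min c d) + 1 then 1 else 0)
      + (if d ≤ min (min a b) (min c d) + 1 then 1 else 0) : ℕ)
    ∨ min (min a b) (min c d) = j

/-- A quadruple of sectors is admissible if it is admissible in both directions. -/
def admissible (j : ℕ) (σ₁ σ₂ σ₃ σ₄ : ℕ × ℕ) : Prop :=
  admDir j σ₁.1 σ₂.1 σ₃.1 σ₄.1 ∧ admDir j σ₁.2 σ₂.2 σ₃.2 σ₄.2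

instance (j a b c d : ℕ) : Decidable (admDir j a b c d) := by
  unfold admDir; infer_instance

instance (j : ℕ) (σ₁ σ₂ σ₃ σ₄ : ℕ × ℕ) : Decidable (admissible j σ₁ σ₂ σ₃ σ₄) := by
  unfold admissible; infer_instance

/-! ### Auxiliary machinery

We prove the sector counting lemma by exhibiting an injection of the set of admissible
triples into a set of "certificates" of size `O(j+1)` after weighting: a certificate
records the positions of the minima defining admissibility, a single free parameter
`s ≤ j`, and for each of the three sectors its index sum `e` together with an offset `δ`
which is controlled by the depth of the sector, `2δ ≤ D + 4` with
`D = 2e + j₀ − 3j = 2·depth`.  Summing the weight `γ^(−D/8)` over certificates gives a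
geometric series in `D`, hence a bound `K·(j+1)`. -/

abbrev SCTrip := (ℕ × ℕ) × (ℕ × ℕ) × (ℕ × ℕ)
abbrev SCCert := (ℕ × ℕ × ℕ × ℕ × ℕ × ℕ × ℕ) × ℕ × (ℕ × ℕ) × (ℕ × ℕ) × (ℕ × ℕ)

set_option synthInstance.maxSize 400 in
instance : DecidableEq SCCert := inferInstance

/-- The certificate (compressed encoding) of an admissible triple. -/
def cert (p4 : ℕ × ℕ) (t : SCTrip) : SCCert :=
  let a1 := t.1.1; let b1 := t.1.2
  let a2 := t.2.1.1; let b2 := t.2.1.2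
  let a3 := t.2.2.1; let b3 := t.2.2.2
  let a4 := p4.1; let b4 := p4.2
  let T := min (min a1 a2) (min a3 a4)
  let U := min (min b1 b2) (min b3 b4)
  let m1 : ℕ := if a1 ≤ T + 1 ∨ U + 1 < b1 then 1 else 0
  let m2 : ℕ := if a2 ≤ T + 1 ∨ U + 1 < b2 then 1 else 0
  let m3 : ℕ := if a3 ≤ T + 1 ∨ U + 1 < b3 then 1 else 0
  let d1 : ℕ := if a1 ≤ T + 1 ∨ U + 1 < b1 then a1 - T else b1 - U
  let d2 : ℕ := if a2 ≤ T + 1 ∨ U + 1 < b2 then a2 - T else b2 - U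
  let d3 : ℕ := if a3 ≤ T + 1 ∨ U + 1 < b3 then a3 - T else b3 - U
  let kX : ℕ := if a4 = T then 0 else if a4 = T + 1 then 1 else 2
  let kY : ℕ := if b4 = U then 0 else if b4 = U + 1 then 1 else if a4 ≤ T + 1 then 2 else 3
  let rsel : ℕ := if a1 ≤ T + 1 ∧ b1 ≤ U + 1 then 0 else if a2 ≤ T + 1 ∧ b2 ≤ U + 1 then 1 else 2
  let brv : ℕ := if a1 ≤ T + 1 ∧ b1 ≤ U + 1 then b1 else if a2 ≤ T + 1 ∧ b2 ≤ U + 1 then b2 else b3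
  let rbit : ℕ := if brv = U + 1 then 1 else 0
  let s : ℕ := if a4 = T ∨ a4 = T + 1 then (if b4 = U ∨ b4 = U + 1 then 0 else U) else T
  ((kX, kY, rsel, rbit, m1, m2, m3), s, (a1 + b1, d1), (a2 + b2, d2), (a3 + b3, d3))

/-- Reconstruction of the minimum of the first sector indices from a certificate. -/
def reconT (p4 : ℕ × ℕ) (c : SCCert) : ℕ :=
  if c.1.1 = 0 then p4.1 else if c.1.1 = 1 then p4.1 - 1 else c.2.1

/-- Reconstruction of the minimum of the second sector indices from a certificate. -/
def reconU (p4 : ℕ × ℕ) (c : SCCert) : ℕ :=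
  if c.1.2.1 = 0 then p4.2
  else if c.1.2.1 = 1 then p4.2 - 1
  else if c.1.2.1 = 2 then c.2.1
  else
    (if c.1.2.2.1 = 0 then c.2.2.1.1 else if c.1.2.2.1 = 1 then c.2.2.2.1.1 else c.2.2.2.2.1)
    - (if c.1.2.2.1 = 0 then reconT p4 c + c.2.2.1.2
        else if c.1.2.2.1 = 1 then reconT p4 c + c.2.2.2.1.2 else reconT p4 c + c.2.2.2.2.2)
    - c.1.2.2.2.1

/-- Reconstruction of a triple of sectors from a certificate. -/
def recon (p4 : ℕ × ℕ) (c : SCCert) : SCTrip :=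
  ((if c.1.2.2.2.2.1 = 1 then (reconT p4 c + c.2.2.1.2, c.2.2.1.1 - (reconT p4 c + c.2.2.1.2))
      else (c.2.2.1.1 - (reconU p4 c + c.2.2.1.2), reconU p4 c + c.2.2.1.2)),
   (if c.1.2.2.2.2.2.1 = 1 then (reconT p4 c + c.2.2.2.1.2, c.2.2.2.1.1 - (reconT p4 c + c.2.2.2.1.2))
      else (c.2.2.2.1.1 - (reconU p4 c + c.2.2.2.1.2), reconU p4 c + c.2.2.2.1.2)),
   (if c.1.2.2.2.2.2.2 = 1 then (reconT p4 c + c.2.2.2.2.2, c.2.2.2.2.1 - (reconT p4 c + c.2.2.2.2.2))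
      else (c.2.2.2.2.1 - (reconU p4 c + c.2.2.2.2.2), reconU p4 c + c.2.2.2.2.2)))

/-- The `(e, δ)` data of a single sector in a certificate lives in this set. -/
def pairSet (j j₀ : ℕ) : Finset (ℕ × ℕ) :=
  (range (2 * j + 1) ×ˢ range (2 * j + 2)).filter
    (fun p => 3 * j ≤ 2 * p.1 + j₀ ∧ 2 * p.2 + 3 * j ≤ 2 * p.1 + j₀ + 4)

/-- The set of certificates. -/
def certSet (j j₀ : ℕ) : Finset SCCert :=
  (range 3 ×ˢ range 4 ×ˢ range 3 ×ˢ range 2 ×ˢ range 2 ×ˢ range 2 ×ˢ range 2) ×ˢ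
    range (j + 1) ×ˢ pairSet j j₀ ×ˢ pairSet j j₀ ×ˢ pairSet j j₀

/-- The weight attached to one `(e, δ)` pair. -/
noncomputable def wfun (γ : ℝ) (j j₀ : ℕ) (p : ℕ × ℕ) : ℝ :=
  γ ^ (-(2 * (p.1 : ℝ) + (j₀ : ℝ) - 3 * (j : ℝ)) / 8)

/-- The weight attached to a certificate. -/
noncomputable def gfun (γ : ℝ) (j j₀ : ℕ) (c : SCCert) : ℝ :=
  wfun γ j j₀ c.2.2.1 * wfun γ j j₀ c.2.2.2.1 * wfun γ j j₀ c.2.2.2.2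

lemma mem_sector {j j₀ a b : ℕ} (h : (a, b) ∈ sectorSet j j₀) :
    a ≤ j ∧ b ≤ j ∧ 3 * j ≤ 2 * (a + b) + j₀ := by
  simp only [sectorSet, mem_filter, mem_product, mem_range, Nat.lt_succ_iff] at h
  exact ⟨h.1.1, h.1.2, h.2.2.2⟩

set_option maxHeartbeats 1000000 in
lemma admDir_cases {j a b c d : ℕ} (h : admDir j a b c d) :
    ((a ≤ min (min a b) (min c d) + 1 ∧ b ≤ min (min a b) (min c d) + 1) ∨
     (a ≤ min (min a b) (min c d) + 1 ∧ c ≤ min (min a b) (min c d) + 1) ∨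
     (a ≤ min (min a b) (min c d) + 1 ∧ d ≤ min (min a b) (min c d) + 1) ∨
     (b ≤ min (min a b) (min c d) + 1 ∧ c ≤ min (min a b) (min c d) + 1) ∨
     (b ≤ min (min a b) (min c d) + 1 ∧ d ≤ min (min a b) (min c d) + 1) ∨
     (c ≤ min (min a b) (min c d) + 1 ∧ d ≤ min (min a b) (min c d) + 1) ∨
     min (min a b) (min c d) = j) := by
  unfold admDir at h
  split_ifs at h <;> omega

set_option maxHeartbeats 1000000 in
/-- Pigeonhole: if some sector is at least two levels above both minima, then some sector
is within one level of both minima. -/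
lemma adm_overlap {j a1 a2 a3 a4 b1 b2 b3 b4 : ℕ}
    (h1 : admDir j a1 a2 a3 a4) (h2 : admDir j b1 b2 b3 b4)
    (ha1 : a1 ≤ j) (ha2 : a2 ≤ j) (ha3 : a3 ≤ j) (ha4 : a4 ≤ j)
    (hb1 : b1 ≤ j) (hb2 : b2 ≤ j) (hb3 : b3 ≤ j) (hb4 : b4 ≤ j) :
    ((min (min a1 a2) (min a3 a4) + 2 ≤ a1 ∧ min (min b1 b2) (min b3 b4) + 2 ≤ b1) ∨
     (min (min a1 a2) (min a3 a4) + 2 ≤ a2 ∧ min (min b1 b2) (min b3 b4) + 2 ≤ b2) ∨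
     (min (min a1 a2) (min a3 a4) + 2 ≤ a3 ∧ min (min b1 b2) (min b3 b4) + 2 ≤ b3) ∨
     (min (min a1 a2) (min a3 a4) + 2 ≤ a4 ∧ min (min b1 b2) (min b3 b4) + 2 ≤ b4)) →
    ((a1 ≤ min (min a1 a2) (min a3 a4) + 1 ∧ b1 ≤ min (min b1 b2) (min b3 b4) + 1) ∨
     (a2 ≤ min (min a1 a2) (min a3 a4) + 1 ∧ b2 ≤ min (min b1 b2) (min b3 b4) + 1) ∨
     (a3 ≤ min (min a1 a2) (min a3 a4) + 1 ∧ b3 ≤ min (min b1 b2) (min b3 b4) + 1) ∨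
     (a4 ≤ min (min a1 a2) (min a3 a4) + 1 ∧ b4 ≤ min (min b1 b2) (min b3 b4) + 1)) := by
  have hc1 := admDir_cases h1
  have hc2 := admDir_cases h2
  omega

set_option maxHeartbeats 2000000 in
lemma certT {a1 b1 a2 b2 a3 b3 a4 b4 : ℕ} :
    reconT (a4, b4) (cert (a4, b4) ((a1, b1), (a2, b2), (a3, b3)))
      = min (min a1 a2) (min a3 a4) := by
  simp only [reconT, cert]
  generalize hTm : min (min a1 a2) (min a3 a4) = T
  generalize hUm : min (min b1 b2) (min b3 b4) = U
  split_ifs <;> first | contradiction | omega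

set_option maxHeartbeats 4000000 in
lemma certU {j j₀ a1 b1 a2 b2 a3 b3 a4 b4 : ℕ}
    (h1 : (a1, b1) ∈ sectorSet j j₀) (h2 : (a2, b2) ∈ sectorSet j j₀)
    (h3 : (a3, b3) ∈ sectorSet j j₀) (h4 : (a4, b4) ∈ sectorSet j j₀)
    (hA : admDir j a1 a2 a3 a4) (hB : admDir j b1 b2 b3 b4) :
    reconU (a4, b4) (cert (a4, b4) ((a1, b1), (a2, b2), (a3, b3)))
      = min (min b1 b2) (min b3 b4) := by
  obtain ⟨ha1, hb1, hs1⟩ := mem_sector h1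
  obtain ⟨ha2, hb2, hs2⟩ := mem_sector h2
  obtain ⟨ha3, hb3, hs3⟩ := mem_sector h3
  obtain ⟨ha4, hb4, hs4⟩ := mem_sector h4
  have hov := adm_overlap hA hB ha1 ha2 ha3 ha4 hb1 hb2 hb3 hb4
  clear hA hB h1 h2 h3 h4
  simp only [reconU]
  rw [certT]
  simp only [cert]
  set T := min (min a1 a2) (min a3 a4) with hTm
  set U := min (min b1 b2) (min b3 b4) with hUm
  split_ifs <;> first | contradiction | omega

set_option maxHeartbeats 8000000 in
/-- Reconstruction: the certificate map can be inverted on admissible triples. -/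
lemma recon_cert {j j₀ : ℕ} {t1 t2 t3 p4 : ℕ × ℕ}
    (h1 : t1 ∈ sectorSet j j₀) (h2 : t2 ∈ sectorSet j j₀) (h3 : t3 ∈ sectorSet j j₀)
    (h4 : p4 ∈ sectorSet j j₀)
    (hadm : admissible j t1 t2 t3 p4) :
    recon p4 (cert p4 (t1, t2, t3)) = (t1, t2, t3) := by
  obtain ⟨a1, b1⟩ := t1
  obtain ⟨a2, b2⟩ := t2
  obtain ⟨a3, b3⟩ := t3
  obtain ⟨a4, b4⟩ := p4
  have hA : admDir j a1 a2 a3 a4 := hadm.1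
  have hB : admDir j b1 b2 b3 b4 := hadm.2
  obtain ⟨ha1, hb1, hs1⟩ := mem_sector h1
  obtain ⟨ha2, hb2, hs2⟩ := mem_sector h2
  obtain ⟨ha3, hb3, hs3⟩ := mem_sector h3
  obtain ⟨ha4, hb4, hs4⟩ := mem_sector h4
  have hov := adm_overlap hA hB ha1 ha2 ha3 ha4 hb1 hb2 hb3 hb4
  have hU := certU h1 h2 h3 h4 hA hB
  have hT := certT (a1 := a1) (b1 := b1) (a2 := a2) (b2 := b2) (a3 := a3) (b3 := b3)
    (a4 := a4) (b4 := b4)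
  clear hA hB h1 h2 h3 h4 hadm
  simp only [recon]
  rw [hT, hU]
  simp only [cert, Prod.mk.injEq]
  set T := min (min a1 a2) (min a3 a4) with hTm
  set U := min (min b1 b2) (min b3 b4) with hUm
  refine ⟨?_, ?_, ?_⟩ <;>
    · split_ifs <;> first | contradiction | (simp only [Prod.mk.injEq]; omega)

set_option maxHeartbeats 4000000 in
/-- The certificate of an admissible triple belongs to the certificate set. -/
lemma cert_mem {j j₀ : ℕ} {t1 t2 t3 p4 : ℕ × ℕ}
    (h1 : t1 ∈ sectorSet j j₀) (h2 : t2 ∈ sectorSet j j₀) (h3 : t3 ∈ sectorSet j j₀)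
    (h4 : p4 ∈ sectorSet j j₀)
    (hadm : admissible j t1 t2 t3 p4) :
    cert p4 (t1, t2, t3) ∈ certSet j j₀ := by
  obtain ⟨a1, b1⟩ := t1
  obtain ⟨a2, b2⟩ := t2
  obtain ⟨a3, b3⟩ := t3
  obtain ⟨a4, b4⟩ := p4
  have hA : admDir j a1 a2 a3 a4 := hadm.1
  have hB : admDir j b1 b2 b3 b4 := hadm.2
  obtain ⟨ha1, hb1, hs1⟩ := mem_sector h1
  obtain ⟨ha2, hb2, hs2⟩ := mem_sector h2
  obtain ⟨ha3, hb3, hs3⟩ := mem_sector h3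
  obtain ⟨ha4, hb4, hs4⟩ := mem_sector h4
  have hov := adm_overlap hA hB ha1 ha2 ha3 ha4 hb1 hb2 hb3 hb4
  clear hA hB h1 h2 h3 h4 hadm
  simp only [cert, certSet, pairSet, mem_product, mem_filter, mem_range]
  set T := min (min a1 a2) (min a3 a4) with hTm
  set U := min (min b1 b2) (min b3 b4) with hUm
  repeat' apply And.intro
  all_goals first | omega | (split_ifs <;> first | contradiction | omega)

lemma sum_inj_le {α β : Type*} [DecidableEq β] {s : Finset α} {t : Finset β}
    (e : α → β) (f : α → ℝ) (g : β → ℝ)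
    (hmem : ∀ a ∈ s, e a ∈ t) (hinj : ∀ a ∈ s, ∀ a' ∈ s, e a = e a' → a = a')
    (hfg : ∀ a ∈ s, f a ≤ g (e a)) (hg : ∀ b ∈ t, 0 ≤ g b) :
    ∑ a ∈ s, f a ≤ ∑ b ∈ t, g b := by
  calc ∑ a ∈ s, f a ≤ ∑ a ∈ s, g (e a) := Finset.sum_le_sum hfg
    _ = ∑ b ∈ s.image e, g b := (Finset.sum_image hinj).symm
    _ ≤ ∑ b ∈ t, g b := Finset.sum_le_sum_of_subset_of_nonneg
        (fun b hb => by obtain ⟨a, ha, rfl⟩ := Finset.mem_image.1 hb; exact hmem a ha)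
        (fun b hb _ => hg b hb)

lemma geom_bound {x : ℝ} (h0 : 0 ≤ x) (h34 : x ≤ 3/4) (N : ℕ) :
    ∑ D ∈ range N, ((D : ℝ) + 3) * x ^ D ≤ 28 := by
  have hlt : x < 1 := by linarith
  have hnorm : ‖x‖ < 1 := by rwa [Real.norm_eq_abs, abs_of_nonneg h0]
  have hs1 : HasSum (fun n : ℕ => (n : ℝ) * x ^ n) (x / (1 - x) ^ 2) :=
    hasSum_coe_mul_geometric_of_norm_lt_one hnorm
  have hs2 : HasSum (fun n : ℕ => x ^ n) (1 - x)⁻¹ := hasSum_geometric_of_lt_one h0 hlt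
  have hb1 : ∑ D ∈ range N, (D : ℝ) * x ^ D ≤ x / (1 - x) ^ 2 := by
    rw [← hs1.tsum_eq]
    exact Summable.sum_le_tsum (range N) (fun i _ => by positivity) hs1.summable
  have hb2 : ∑ D ∈ range N, x ^ D ≤ (1 - x)⁻¹ := by
    rw [← hs2.tsum_eq]
    exact Summable.sum_le_tsum (range N) (fun i _ => by positivity) hs2.summable
  have h14 : (1/4 : ℝ) ≤ 1 - x := by linarith
  have hx12 : x / (1 - x) ^ 2 ≤ 12 := by
    rw [div_le_iff₀ (by nlinarith)]
    nlinarith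
  have hx4 : (1 - x)⁻¹ ≤ 4 := by
    rw [inv_le_iff_one_le_mul₀ (by linarith)]
    linarith
  calc ∑ D ∈ range N, ((D : ℝ) + 3) * x ^ D
      = ∑ D ∈ range N, ((D : ℝ) * x ^ D + 3 * x ^ D) := by
        apply sum_congr rfl; intro i _; ring
    _ = (∑ D ∈ range N, (D : ℝ) * x ^ D) + 3 * ∑ D ∈ range N, x ^ D := by
        rw [sum_add_distrib, mul_sum]
    _ ≤ 28 := by
        have h1' : ∑ D ∈ range N, (D:ℝ) * x ^ D ≤ 12 := le_trans hb1 hx12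
        have h2' : ∑ D ∈ range N, x ^ D ≤ 4 := le_trans hb2 hx4
        nlinarith

lemma x_le {γ : ℝ} (hγ : 10 ≤ γ) : γ ^ (-(1:ℝ)/8) ≤ 3/4 := by
  have hγ0 : (0:ℝ) < γ := by linarith
  have h43 : (4/3 : ℝ) ≤ γ ^ ((1:ℝ)/8) := by
    have h8 : ((4/3 : ℝ) ^ (8:ℕ)) ≤ γ := by norm_num; linarith
    have := Real.rpow_le_rpow (by positivity) h8 (by norm_num : (0:ℝ) ≤ 1/8)
    rwa [← Real.rpow_natCast (4/3 : ℝ) 8, ← Real.rpow_mul (by norm_num),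
      show ((8:ℕ):ℝ) * (1/8) = 1 by norm_num, Real.rpow_one] at this
  have hpos : (0:ℝ) < γ ^ ((1:ℝ)/8) := Real.rpow_pos_of_pos hγ0 _
  rw [show -(1:ℝ)/8 = -(1/8) by ring, Real.rpow_neg hγ0.le]
  rw [inv_le_comm₀ hpos (by norm_num)]
  linarith

/-- The basic one-sector estimate: the weighted sum over the `(e, δ)` data is `O(1)`. -/
lemma pairSum_le {γ : ℝ} (hγ : 10 ≤ γ) (j j₀ : ℕ) :
    ∑ p ∈ pairSet j j₀, wfun γ j j₀ p ≤ 28 := by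
  have hγ0 : (0:ℝ) < γ := by linarith
  have hx0 : (0:ℝ) ≤ γ ^ (-(1:ℝ)/8) := Real.rpow_nonneg hγ0.le _
  have hx34 : γ ^ (-(1:ℝ)/8) ≤ 3/4 := x_le hγ
  have step1 : ∑ p ∈ pairSet j j₀, wfun γ j j₀ p
      ≤ ∑ q ∈ (range (4*j + j₀ + 1) ×ˢ range (2*j + 2)).filter (fun q => 2*q.2 ≤ q.1 + 4),
          (γ ^ (-(1:ℝ)/8)) ^ q.1 := by
    apply sum_inj_le (e := fun p => (2*p.1 + j₀ - 3*j, p.2))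
    · intro p hp
      simp only [pairSet, mem_filter, mem_product, mem_range] at hp ⊢
      omega
    · intro p hp p' hp' hee
      simp only [pairSet, mem_filter, mem_product, mem_range] at hp hp'
      simp only [Prod.mk.injEq] at hee
      have hc : p.1 = p'.1 ∧ p.2 = p'.2 := by omega
      exact Prod.ext hc.1 hc.2
    · intro p hp
      simp only [pairSet, mem_filter, mem_product, mem_range] at hp
      have h3 : 3*j ≤ 2*p.1 + j₀ := hp.2.1
      apply le_of_eq
      have hcast : ((2*p.1 + j₀ - 3*j : ℕ) : ℝ) = 2*(p.1:ℝ) + (j₀:ℝ) - 3*(j:ℝ) := by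
        rw [Nat.cast_sub h3]; push_cast; ring
      calc wfun γ j j₀ p
          = γ ^ ((-(1:ℝ)/8) * ((2*p.1 + j₀ - 3*j : ℕ) : ℝ)) := by
            rw [wfun]; congr 1; rw [hcast]; ring
        _ = (γ ^ (-(1:ℝ)/8)) ^ (((2*p.1 + j₀ - 3*j : ℕ) : ℝ)) := Real.rpow_mul hγ0.le _ _
        _ = (γ ^ (-(1:ℝ)/8)) ^ (2*p.1 + j₀ - 3*j : ℕ) := Real.rpow_natCast _ _
    · intro q _
      positivity
  refine le_trans step1 ?_
  rw [Finset.sum_filter, Finset.sum_product]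
  have inner : ∀ D : ℕ, ∑ δ ∈ range (2*j + 2), (if 2*δ ≤ D + 4 then (γ ^ (-(1:ℝ)/8)) ^ D else 0)
      ≤ ((D:ℝ) + 3) * (γ ^ (-(1:ℝ)/8)) ^ D := by
    intro D
    rw [← Finset.sum_filter, Finset.sum_const, nsmul_eq_mul]
    apply mul_le_mul_of_nonneg_right _ (by positivity)
    have hsub : (range (2*j+2)).filter (fun δ => 2*δ ≤ D + 4) ⊆ range (D + 3) := by
      intro δ hδ
      simp only [mem_filter, mem_range] at hδ ⊢
      omega
    calc ((((range (2*j+2)).filter (fun δ => 2*δ ≤ D + 4)).card : ℝ))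
        ≤ ((range (D+3)).card : ℝ) := by exact_mod_cast Nat.cast_le.2 (card_le_card hsub)
      _ = (D:ℝ) + 3 := by rw [card_range]; push_cast; ring
  calc ∑ D ∈ range (4*j + j₀ + 1), ∑ δ ∈ range (2*j + 2),
        (if 2*δ ≤ D + 4 then (γ ^ (-(1:ℝ)/8)) ^ D else 0)
      ≤ ∑ D ∈ range (4*j + j₀ + 1), ((D:ℝ) + 3) * (γ ^ (-(1:ℝ)/8)) ^ D :=
        sum_le_sum (fun D _ => inner D)
    _ ≤ 28 := geom_bound hx0 hx34 _

lemma triple_sum_mul {α : Type*} (P : Finset α) (h : α → ℝ) :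
    ∑ p1 ∈ P, ∑ p2 ∈ P, ∑ p3 ∈ P, h p1 * h p2 * h p3 = (∑ p ∈ P, h p) ^ 3 := by
  simp only [← Finset.sum_mul, ← Finset.mul_sum]
  ring

/-- Sector counting lemma for a single bare vertex (Lemma 3.2): with `σ₄` fixed, the
sum over admissible `(σ₁, σ₂, σ₃)` of `γ^(−(l(σ₁)+l(σ₂)+l(σ₃))/4)` is `O(j + j₀ + 1)`. -/
theorem sector_counting_single_vertex :
    ∃ K : ℝ, 0 < K ∧ ∀ γ : ℝ, 10 ≤ γ → ∀ j j₀ : ℕ, 1 ≤ j →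
      ∀ σ₄ ∈ sectorSet j j₀,
        ∑ t ∈ (sectorSet j j₀ ×ˢ sectorSet j j₀ ×ˢ sectorSet j j₀).filter
            (fun t => admissible j t.1 t.2.1 t.2.2 σ₄),
          γ ^ (-(depth j j₀ t.1 + depth j j₀ t.2.1 + depth j j₀ t.2.2) / 4)
        ≤ K * ((j : ℝ) + (j₀ : ℝ) + 1) := by
  refine ⟨12644352, by norm_num, ?_⟩
  intro γ hγ j j₀ _ σ₄ h4
  have hγ0 : (0:ℝ) < γ := by linarith
  have hw0 : ∀ p, 0 ≤ wfun γ j j₀ p := fun p => Real.rpow_nonneg hγ0.le _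
  have key : ∑ t ∈ (sectorSet j j₀ ×ˢ sectorSet j j₀ ×ˢ sectorSet j j₀).filter
        (fun t => admissible j t.1 t.2.1 t.2.2 σ₄),
      γ ^ (-(depth j j₀ t.1 + depth j j₀ t.2.1 + depth j j₀ t.2.2) / 4)
      ≤ ∑ c ∈ certSet j j₀, gfun γ j j₀ c := by
    apply sum_inj_le (e := cert σ₄)
    · intro t ht
      simp only [mem_filter, mem_product] at ht
      exact cert_mem ht.1.1 ht.1.2.1 ht.1.2.2 h4 ht.2
    · intro t ht t' ht' he
      simp only [mem_filter, mem_product] at ht ht'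
      have r1 := recon_cert ht.1.1 ht.1.2.1 ht.1.2.2 h4 ht.2
      have r2 := recon_cert ht'.1.1 ht'.1.2.1 ht'.1.2.2 h4 ht'.2
      have := congrArg (recon σ₄) he
      rw [r1, r2] at this
      exact this
    · intro t ht
      apply le_of_eq
      have w1 : wfun γ j j₀ (cert σ₄ t).2.2.1
          = γ ^ (-(2 * ((t.1.1 + t.1.2 : ℕ) : ℝ) + (j₀ : ℝ) - 3 * (j : ℝ)) / 8) := rfl
      have w2 : wfun γ j j₀ (cert σ₄ t).2.2.2.1
          = γ ^ (-(2 * ((t.2.1.1 + t.2.1.2 : ℕ) : ℝ) + (j₀ : ℝ) - 3 * (j : ℝ)) / 8) := rfl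
      have w3 : wfun γ j j₀ (cert σ₄ t).2.2.2.2
          = γ ^ (-(2 * ((t.2.2.1 + t.2.2.2 : ℕ) : ℝ) + (j₀ : ℝ) - 3 * (j : ℝ)) / 8) := rfl
      rw [gfun]
      rw [w1, w2, w3, ← Real.rpow_add hγ0, ← Real.rpow_add hγ0]
      congr 1
      simp only [depth]
      push_cast
      ring
    · intro c _
      exact mul_nonneg (mul_nonneg (hw0 _) (hw0 _)) (hw0 _)
  refine le_trans key ?_
  have hP := pairSum_le hγ j j₀
  have hP0 : (0:ℝ) ≤ ∑ p ∈ pairSet j j₀, wfun γ j j₀ p := sum_nonneg fun p _ => hw0 p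
  have hsplit : ∑ c ∈ certSet j j₀, gfun γ j j₀ c
      = 576 * ((j:ℝ) + 1) * (∑ p ∈ pairSet j j₀, wfun γ j j₀ p) ^ 3 := by
    rw [certSet]
    rw [Finset.sum_product]
    have inner1 : ∀ x, ∑ y ∈ range (j + 1) ×ˢ pairSet j j₀ ×ˢ pairSet j j₀ ×ˢ pairSet j j₀,
        gfun γ j j₀ (x, y) = ((j:ℝ)+1) * (∑ p ∈ pairSet j j₀, wfun γ j j₀ p) ^ 3 := by
      intro x
      rw [Finset.sum_product]
      have inner2 : ∀ s : ℕ, ∑ z ∈ pairSet j j₀ ×ˢ pairSet j j₀ ×ˢ pairSet j j₀,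
          gfun γ j j₀ (x, s, z) = (∑ p ∈ pairSet j j₀, wfun γ j j₀ p) ^ 3 := by
        intro s
        rw [Finset.sum_product]
        simp only [Finset.sum_product]
        rw [← triple_sum_mul (pairSet j j₀) (wfun γ j j₀)]
        rfl
      simp only [inner2]
      rw [Finset.sum_const, card_range, nsmul_eq_mul]
      push_cast
      ring
    simp only [inner1]
    rw [Finset.sum_const, nsmul_eq_mul]
    have hcard : ((range 3 ×ˢ range 4 ×ˢ range 3 ×ˢ range 2 ×ˢ range 2 ×ˢ range 2 ×ˢ range 2).card : ℝ)
        = 576 := by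
      simp [Finset.card_product]
    rw [hcard]
    ring
  rw [hsplit]
  have h28 : (∑ p ∈ pairSet j j₀, wfun γ j j₀ p) ^ 3 ≤ 28 ^ 3 :=
    pow_le_pow_left₀ hP0 hP 3
  have hj1 : ((j:ℝ) + 1) ≤ ((j:ℝ) + (j₀:ℝ) + 1) := by
    have : (0:ℝ) ≤ (j₀:ℝ) := Nat.cast_nonneg _
    linarith
  calc 576 * ((j:ℝ) + 1) * (∑ p ∈ pairSet j j₀, wfun γ j j₀ p) ^ 3
      ≤ 576 * ((j:ℝ) + 1) * 28 ^ 3 := by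
        apply mul_le_mul_of_nonneg_left h28
        positivity
    _ = 12644352 * ((j:ℝ) + 1) := by ring
    _ ≤ 12644352 * ((j:ℝ) + (j₀:ℝ) + 1) := by linarith
end

section
/- For every real γ ≥ 10 there exist constants c₁, c₂ > 0 such that for all natural numbers j₀ ≥ 1 and j > j₀: c₁ · (j + j₀) · γ^(−(3j − j₀)/2) ≤ Σ γ^(−(s₊ + s₋)) ≤ c₂ · (j + j₀) · γ^(−(3j − j₀)/2), where the sum ranges over all pairs of natural numbers (s₊, s₋) with 2s₊ ≥ j − j₀, 2s₋ ≥ j − j₀, s₊ ≤ j, s₋ ≤ j, and 2(s₊ + s₋) ≥ 3j − j₀. -/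
open Finset

lemma rpow_neg_natCast_eq (γ : ℝ) (hγ : 0 < γ) (k : ℕ) :
    γ ^ (-(k : ℝ)) = (γ⁻¹) ^ k := by
  rw [Real.rpow_neg hγ.le, Real.rpow_natCast, inv_pow]

/-- Two-sided bound for the tadpole sum (Lemma 5.1, formula (bdtj)):
`c₁ (j+j₀) γ^(−(3j−j₀)/2) ≤ Σ_σ γ^(−(s₊+s₋)) ≤ c₂ (j+j₀) γ^(−(3j−j₀)/2)`. -/
theorem tadpole_sector_sum_two_sided (γ : ℝ) (hγ : 10 ≤ γ) :
    ∃ c₁ c₂ : ℝ, 0 < c₁ ∧ 0 < c₂ ∧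
      ∀ j₀ : ℕ, 1 ≤ j₀ → ∀ j : ℕ, j₀ < j →
        c₁ * ((j : ℝ) + (j₀ : ℝ)) * γ ^ (-((3 * (j : ℝ) - (j₀ : ℝ)) / 2))
          ≤ ∑ σ ∈ sectorSet j j₀, γ ^ (-((σ.1 : ℝ) + (σ.2 : ℝ))) ∧
        ∑ σ ∈ sectorSet j j₀, γ ^ (-((σ.1 : ℝ) + (σ.2 : ℝ)))
          ≤ c₂ * ((j : ℝ) + (j₀ : ℝ)) * γ ^ (-((3 * (j : ℝ) - (j₀ : ℝ)) / 2)) := by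
  have hγ0 : (0:ℝ) < γ := by linarith
  have hγ1 : (1:ℝ) ≤ γ := by linarith
  refine ⟨γ ^ (-(1/2 : ℝ)) / 2, 2, by positivity, by norm_num, ?_⟩
  intro j₀ hj₀ j hj
  set A : ℝ := (3 * (j:ℝ) - (j₀:ℝ)) / 2 with hA
  constructor
  · -- lower bound
    set m : ℕ := (j + j₀) / 2 with hm
    have hmj : m < j := by omega
    have h2m : 2*m ≤ j + j₀ := by omega
    have h2m' : j + j₀ ≤ 2*m + 1 := by omega
    set T : Finset (ℕ×ℕ) := (Finset.range (m+1)).image (fun i => (j - i, j - m + i)) with hT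
    have hsub : T ⊆ sectorSet j j₀ := by
      intro σ hσ
      simp only [hT, Finset.mem_image, Finset.mem_range] at hσ
      obtain ⟨i, hi, rfl⟩ := hσ
      simp only [sectorSet, Finset.mem_filter, Finset.mem_product, Finset.mem_range]
      omega
    have hinj : ∀ x ∈ Finset.range (m+1), ∀ y ∈ Finset.range (m+1),
        (fun i => (j - i, j - m + i)) x = (fun i => (j - i, j - m + i)) y → x = y := by
      intro x hx y hy h
      simp only [Finset.mem_range, Prod.mk.injEq] at *
      omega
    have hTsum : ∑ σ ∈ T, γ ^ (-((σ.1:ℝ) + (σ.2:ℝ)))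
        = ((m:ℝ)+1) * γ ^ (-(((2*j - m : ℕ)) : ℝ)) := by
      rw [hT, Finset.sum_image hinj]
      have hc : ∀ i ∈ Finset.range (m+1),
          γ ^ (-(((j-i : ℕ):ℝ) + ((j-m+i : ℕ):ℝ))) = γ ^ (-(((2*j - m : ℕ)):ℝ)) := by
        intro i hi; simp only [Finset.mem_range] at hi
        congr 1
        have h' : (j-i : ℕ) + (j-m+i : ℕ) = 2*j - m := by omega
        rw [← Nat.cast_add, h']
      rw [Finset.sum_congr rfl hc, Finset.sum_const, Finset.card_range, nsmul_eq_mul]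
      push_cast; ring
    have hle : ∑ σ ∈ T, γ ^ (-((σ.1:ℝ) + (σ.2:ℝ)))
        ≤ ∑ σ ∈ sectorSet j j₀, γ ^ (-((σ.1:ℝ) + (σ.2:ℝ))) := by
      apply Finset.sum_le_sum_of_subset_of_nonneg hsub
      intro σ _ _; positivity
    have hcast : ((2*j - m : ℕ) : ℝ) = 2*(j:ℝ) - (m:ℝ) := by
      have : m ≤ 2*j := by omega
      push_cast [Nat.cast_sub this]; ring
    have hexp : γ ^ (-(A + 1/2)) ≤ γ ^ (-(((2*j - m : ℕ)):ℝ)) := by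
      apply Real.rpow_le_rpow_of_exponent_le hγ1
      rw [hcast, neg_le_neg_iff]
      have : (j:ℝ) + (j₀:ℝ) ≤ 2*(m:ℝ) + 1 := by exact_mod_cast h2m'
      rw [hA]; linarith
    have hcard : ((j:ℝ) + (j₀:ℝ)) / 2 ≤ (m:ℝ) + 1 := by
      have : (j:ℝ) + (j₀:ℝ) ≤ 2*(m:ℝ) + 1 := by exact_mod_cast h2m'
      linarith
    have hjj0 : (0:ℝ) ≤ (j:ℝ) + (j₀:ℝ) := by positivity
    calc γ ^ (-(1/2:ℝ)) / 2 * ((j:ℝ) + (j₀:ℝ)) * γ ^ (-A)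
        = ((j:ℝ) + (j₀:ℝ)) / 2 * γ ^ (-(A + 1/2)) := by
          rw [neg_add, Real.rpow_add hγ0]; ring
      _ ≤ ((m:ℝ)+1) * γ ^ (-(((2*j - m : ℕ)):ℝ)) := by
          apply mul_le_mul hcard hexp (by positivity) (by positivity)
      _ = ∑ σ ∈ T, γ ^ (-((σ.1:ℝ) + (σ.2:ℝ))) := hTsum.symm
      _ ≤ _ := hle
  · -- upper bound
    set k₀ : ℕ := (3*j - j₀ + 1) / 2 with hk₀
    have hk₀A : A ≤ (k₀:ℝ) := by
      have h1 : 3*j - j₀ ≤ 2*k₀ := by omega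
      have h2 : (3*(j:ℝ) - (j₀:ℝ)) ≤ 2*(k₀:ℝ) := by
        have hj0j : j₀ ≤ 3*j := by omega
        have := (Nat.cast_le (α := ℝ)).2 h1
        push_cast [Nat.cast_sub hj0j] at this
        linarith
      rw [hA]; linarith
    have hinj2 : ∀ x ∈ sectorSet j j₀, ∀ y ∈ sectorSet j j₀,
        (fun σ : ℕ×ℕ => (σ.1, σ.1 + σ.2)) x = (fun σ : ℕ×ℕ => (σ.1, σ.1 + σ.2)) y → x = y := by
      intro x _ y _ h
      simp only [Prod.mk.injEq] at h
      ext <;> omega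
    have hkey : ∑ σ ∈ sectorSet j j₀, γ ^ (-((σ.1:ℝ) + (σ.2:ℝ)))
        = ∑ p ∈ (sectorSet j j₀).image (fun σ => (σ.1, σ.1 + σ.2)), γ ^ (-((p.2:ℕ):ℝ)) := by
      rw [Finset.sum_image hinj2]
      apply Finset.sum_congr rfl
      intro σ _
      congr 1
      push_cast; ring
    have hsub2 : (sectorSet j j₀).image (fun σ : ℕ×ℕ => (σ.1, σ.1 + σ.2))
        ⊆ Finset.range (j+1) ×ˢ Finset.Icc k₀ (2*j) := by
      intro p hp
      simp only [Finset.mem_image] at hp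
      obtain ⟨σ, hσ, rfl⟩ := hp
      simp only [sectorSet, Finset.mem_filter, Finset.mem_product, Finset.mem_range] at hσ
      simp only [Finset.mem_product, Finset.mem_range, Finset.mem_Icc]
      omega
    have hstep : ∑ p ∈ (sectorSet j j₀).image (fun σ : ℕ×ℕ => (σ.1, σ.1 + σ.2)), γ ^ (-((p.2:ℕ):ℝ))
        ≤ ∑ p ∈ Finset.range (j+1) ×ˢ Finset.Icc k₀ (2*j), γ ^ (-((p.2:ℕ):ℝ)) := by
      apply Finset.sum_le_sum_of_subset_of_nonneg hsub2
      intro p _ _; positivity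
    have hprod : ∑ p ∈ Finset.range (j+1) ×ˢ Finset.Icc k₀ (2*j), γ ^ (-((p.2:ℕ):ℝ))
        = ((j:ℝ)+1) * ∑ k ∈ Finset.Icc k₀ (2*j), γ ^ (-((k:ℕ):ℝ)) := by
      rw [Finset.sum_product]
      simp only
      rw [Finset.sum_const, Finset.card_range, nsmul_eq_mul]
      push_cast; ring
    -- geometric bound
    have hr : γ⁻¹ ≤ 1/10 := by
      rw [inv_le_comm₀ (by linarith) (by norm_num)]; linarith
    have hr0 : (0:ℝ) ≤ γ⁻¹ := by positivity
    have hgeom : ∑ k ∈ Finset.Icc k₀ (2*j), γ ^ (-((k:ℕ):ℝ)) ≤ 2 * γ ^ (-((k₀:ℕ):ℝ)) := by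
      have h1 : ∑ k ∈ Finset.Icc k₀ (2*j), γ ^ (-((k:ℕ):ℝ))
          = ∑ k ∈ Finset.Icc k₀ (2*j), (γ⁻¹) ^ k := by
        apply Finset.sum_congr rfl; intro k _; exact rpow_neg_natCast_eq γ hγ0 k
      rw [h1, rpow_neg_natCast_eq γ hγ0 k₀]
      rw [← Finset.Ico_add_one_right_eq_Icc, Finset.sum_Ico_eq_sum_range]
      have h2 : ∀ i ∈ Finset.range (2*j + 1 - k₀), (γ⁻¹) ^ (k₀ + i) = (γ⁻¹) ^ k₀ * (γ⁻¹) ^ i := by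
        intro i _; rw [pow_add]
      rw [Finset.sum_congr rfl h2, ← Finset.mul_sum]
      have h3 : ∑ i ∈ Finset.range (2*j + 1 - k₀), (γ⁻¹) ^ i ≤ 2 := by
        calc ∑ i ∈ Finset.range (2*j + 1 - k₀), (γ⁻¹) ^ i
            ≤ ∑ i ∈ Finset.range (2*j + 1 - k₀), ((1:ℝ)/10) ^ i := by
              apply Finset.sum_le_sum
              intro i _
              exact pow_le_pow_left₀ hr0 hr i
          _ ≤ ∑' i : ℕ, ((1:ℝ)/10) ^ i := by
              apply Summable.sum_le_tsum
              · intro i _; positivity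
              · exact summable_geometric_of_lt_one (by norm_num) (by norm_num)
          _ = 10/9 := by
              rw [tsum_geometric_of_lt_one (by norm_num) (by norm_num)]; norm_num
          _ ≤ 2 := by norm_num
      calc (γ⁻¹) ^ k₀ * ∑ i ∈ Finset.range (2*j + 1 - k₀), (γ⁻¹) ^ i
          ≤ (γ⁻¹) ^ k₀ * 2 := by
            apply mul_le_mul_of_nonneg_left h3 (by positivity)
        _ = 2 * (γ⁻¹) ^ k₀ := by ring
    have hk₀exp : γ ^ (-((k₀:ℕ):ℝ)) ≤ γ ^ (-A) := by
      apply Real.rpow_le_rpow_of_exponent_le hγ1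
      linarith
    have hj1 : ((j:ℝ) + 1) ≤ (j:ℝ) + (j₀:ℝ) := by
      have : (1:ℝ) ≤ (j₀:ℝ) := by exact_mod_cast hj₀
      linarith
    calc ∑ σ ∈ sectorSet j j₀, γ ^ (-((σ.1:ℝ) + (σ.2:ℝ)))
        ≤ ((j:ℝ)+1) * ∑ k ∈ Finset.Icc k₀ (2*j), γ ^ (-((k:ℕ):ℝ)) := by
          rw [hkey]; rw [← hprod]; exact hstep
      _ ≤ ((j:ℝ)+1) * (2 * γ ^ (-((k₀:ℕ):ℝ))) := by
          apply mul_le_mul_of_nonneg_left hgeom (by positivity)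
      _ ≤ ((j:ℝ)+(j₀:ℝ)) * (2 * γ ^ (-A)) := by
          apply mul_le_mul hj1 _ (by positivity) (by positivity)
          apply mul_le_mul_of_nonneg_left hk₀exp (by norm_num)
      _ = 2 * ((j:ℝ)+(j₀:ℝ)) * γ ^ (-A) := by ring
end
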